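/- Suppose ξ̃ satisfies the bilinear system, and let T(f₁) := ξ̃_{0,0,2}ξ̃_{0,1,1}/(ξ̃_{0,0,1}ξ̃_{0,1,2}) (the value of f₁ with all third indices shifted by +1). Then f₁·T(f₁)·(a₁a₂f₁f₂ + a₁f₁ + 1) = a₁a₂f₁f₂ + a₁x²q²f₁ + x²q². -/

import Mathlib

noncomputable section

/-- The bilinear system (11)–(18) for a nowhere-vanishing `ξ̃ : ℤ³ → ℂ`. -/
def BilinearSystem (q a1 a2 x : ℂ) (ξ : ℤ → ℤ → ℤ → ℂ) : Prop :=
  ∀ a b c : ℤ,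
    (q ^ (a - b - c) / (a1 * a2) * ξ (a+1) (b+1) c * ξ a b (c+1) -
        x ^ 2 * q ^ c * ξ (a+1) (b+1) (c+1) * ξ a b c +
        a2 * x * q ^ b * ξ (a+1) b c * ξ a (b+1) (c+1) = 0) ∧
    (x ^ 2 * q ^ (a - b + 2*c) / (a1 * a2) * ξ (a+1) (b+1) c * ξ a b (c-1) -
        ξ (a+1) (b+1) (c-1) * ξ a b c +
        a2 * x * q ^ (b + c) * ξ (a+1) b c * ξ a (b+1) (c-1) = 0) ∧
    (a1 * a2 * x * q ^ (b + c) * ξ (a+1) (b+2) c * ξ a b (c-1) -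
        q ^ a * ξ (a+1) (b+1) (c-1) * ξ a (b+1) c +
        q ^ (a - b) / a2 * ξ (a+1) (b+1) c * ξ a (b+1) (c-1) = 0) ∧
    (a1 * a2 * q ^ (b - c) * ξ (a+1) (b+2) c * ξ a b (c+1) -
        x * q ^ a * ξ (a+1) (b+1) (c+1) * ξ a (b+1) c +
        x * q ^ (a - b) / a2 * ξ (a+1) (b+1) c * ξ a (b+1) (c+1) = 0) ∧
    (q ^ (a - c) * ξ (a+2) (b+1) c * ξ a b (c+1) -
        a1 * x ^ 2 * q ^ c * ξ (a+2) (b+1) (c+1) * ξ a b c +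
        a1 * a2 * x * q ^ b * ξ (a+1) (b+1) (c+1) * ξ (a+1) b c = 0) ∧
    (x ^ 2 * q ^ (a + c) * ξ (a+2) (b+1) c * ξ a b (c-1) -
        a1 * q ^ (-c) * ξ (a+2) (b+1) (c-1) * ξ a b c +
        a1 * a2 * x * q ^ b * ξ (a+1) (b+1) (c-1) * ξ (a+1) b c = 0) ∧
    (a1 * a2 * x * ξ a b c * ξ (a+1) (b+2) c -
        q ^ (2*a - 2*b - c) / (a1 * a2) * ξ (a+1) (b+1) c * ξ a (b+1) c +
        q ^ (2*a - b - c) / a1 * ξ a (b+1) (c+1) * ξ (a+1) (b+1) (c-1) = 0) ∧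
    (a1 * a2 * ξ a b c * ξ (a+1) (b+2) c -
        x * q ^ (2*a - 2*b + c) / (a1 * a2) * ξ (a+1) (b+1) c * ξ a (b+1) c +
        x * q ^ (2*a + 2*b + c) / a1 * ξ a (b+1) (c-1) * ξ (a+1) (b+1) (c+1) = 0)

set_option maxHeartbeats 4000000 in
theorem painleve_T_f1 (q a1 a2 x : ℂ) (hq : q ≠ 0) (ha1 : a1 ≠ 0) (ha2 : a2 ≠ 0) (hx : x ≠ 0)
    (ξ : ℤ → ℤ → ℤ → ℂ) (hξ : ∀ a b c : ℤ, ξ a b c ≠ 0)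
    (hbil : BilinearSystem q a1 a2 x ξ) (f1 f2 : ℂ)
    (hf1 : f1 = ξ 0 0 1 * ξ 0 1 0 / (ξ 0 0 0 * ξ 0 1 1))
    (hf2 : f2 = -(ξ 0 1 1 * ξ 1 1 0) / (ξ 0 1 0 * ξ 1 1 1))
    (Tf1 : ℂ) (hTf1 : Tf1 = ξ 0 0 2 * ξ 0 1 1 / (ξ 0 0 1 * ξ 0 1 2)) :
    f1 * Tf1 * (a1 * a2 * f1 * f2 + a1 * f1 + 1) =
      a1 * a2 * f1 * f2 + a1 * x ^ 2 * q ^ 2 * f1 + x ^ 2 * q ^ 2 := by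
  obtain ⟨-, -, h3, h4, -, -, h7, h8⟩ := hbil 0 0 1
  norm_num at h3 h4 h7 h8
  field_simp at h3 h4 h7 h8
  have hd1ne : a1 * a2 * (ξ 1 1 0 * ξ 0 1 1) - a1 * (ξ 1 1 1 * ξ 0 1 0) ≠ 0 := by
    have hd1 : a1 * a2 * (ξ 1 1 0 * ξ 0 1 1) - a1 * (ξ 1 1 1 * ξ 0 1 0)
        = a1 * (a1 * (a2 ^ 2 * (x * (q * (ξ 1 2 1 * ξ 0 0 0))))) := by
      linear_combination (-a1) * h3
    rw [hd1]
    exact mul_ne_zero ha1 (mul_ne_zero ha1 (mul_ne_zero (pow_ne_zero 2 ha2)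
      (mul_ne_zero hx (mul_ne_zero hq (mul_ne_zero (hξ 1 2 1) (hξ 0 0 0))))))
  have hd2ne : ξ 1 1 1 * ξ 0 1 1 - a2 * (ξ 0 1 2 * ξ 1 1 0) ≠ 0 := by
    have hd2 : ξ 1 1 1 * ξ 0 1 1 - a2 * (ξ 0 1 2 * ξ 1 1 0)
        = q * (x * (a1 ^ 2 * (a2 ^ 2 * (ξ 0 0 1 * ξ 1 2 1)))) := by
      apply mul_left_cancel₀ (mul_ne_zero hq ha1)
      linear_combination (-(q * a1)) * h7
    rw [hd2]
    exact mul_ne_zero hq (mul_ne_zero hx (mul_ne_zero (pow_ne_zero 2 ha1)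
      (mul_ne_zero (pow_ne_zero 2 ha2) (mul_ne_zero (hξ 0 0 1) (hξ 1 2 1)))))
  have hA1 : (ξ 0 0 1) * (a1 * a2 * ((ξ 1 1 0) * (ξ 0 1 1)) - a1 * ((ξ 1 1 1) * (ξ 0 1 0))) = (ξ 0 0 0) * ((ξ 1 1 1) * (ξ 0 1 1) - a2 * ((ξ 0 1 2) * (ξ 1 1 0))) := by
    apply mul_left_cancel₀ (mul_ne_zero hq ha1)
    linear_combination ξ 0 0 0 * (q * a1) * h7 - q * a1 ^ 2 * ξ 0 0 1 * h3
  have hA2 : (ξ 0 0 2) * ((ξ 0 1 0) * ((ξ 1 1 1) * (ξ 0 1 1) - a2 * ((ξ 0 1 2) * (ξ 1 1 0)))) = (ξ 0 0 1) * (a1 * (x ^ 2 * q ^ 2 - 1) * (ξ 1 1 1) * (ξ 0 1 1) ^ 2 + a1 * a2 * (ξ 0 1 1) * (ξ 0 1 2) * (ξ 1 1 0) - a1 * x ^ 2 * q ^ 2 * (ξ 0 1 0) * (ξ 1 1 1) * (ξ 0 1 2)) := by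
    apply mul_left_cancel₀ (mul_ne_zero hx (mul_ne_zero hq ha1))
    linear_combination x ^ 2 * q ^ 2 * ξ 0 1 0 * a1 ^ 2 * ξ 0 0 1 * h4
      - x ^ 2 * q ^ 2 * ξ 0 1 0 * ξ 0 0 2 * (a1 * h8)
      - x * (ξ 0 1 0 * ξ 0 0 2 + a1 * ξ 0 0 1 * ξ 0 1 1) * ((q * a1) * h7)
      + q ^ 2 * x ^ 2 * (ξ 0 1 0 * ξ 0 0 2 + a1 * ξ 0 0 1 * ξ 0 1 1) * (a1 * h8)
  have key : (ξ 0 0 2) * (ξ 0 1 0) * (-(a1 * a2 * (ξ 0 0 1) * (ξ 1 1 0) * (ξ 0 1 1)) + a1 * (ξ 0 0 1) * (ξ 0 1 0) * (ξ 1 1 1) + (ξ 0 0 0) * (ξ 0 1 1) * (ξ 1 1 1)) + a1 * a2 * (ξ 0 0 0) * (ξ 0 0 1) * (ξ 0 1 1) * (ξ 0 1 2) * (ξ 1 1 0) - a1 * x ^ 2 * q ^ 2 * (ξ 0 0 0) * (ξ 0 0 1) * (ξ 0 1 0) * (ξ 0 1 2) * (ξ 1 1 1) - x ^ 2 * q ^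 2 * (ξ 0 0 0) ^ 2 * (ξ 0 1 1) * (ξ 0 1 2) * (ξ 1 1 1) = 0 := by
    apply mul_left_cancel₀ (mul_ne_zero hd1ne (mul_ne_zero (hξ 0 1 0) hd2ne))
    linear_combination ((a1 * a2 * ((ξ 1 1 0) * (ξ 0 1 1)) - a1 * ((ξ 1 1 1) * (ξ 0 1 0))) * ((ξ 0 1 0) * ((ξ 0 0 0) * (ξ 0 1 1) * (ξ 1 1 1) - (ξ 0 0 1) * (a1 * a2 * ((ξ 1 1 0) * (ξ 0 1 1)) - a1 * ((ξ 1 1 1) * (ξ 0 1 0)))))) * hA2 + ((a1 * (x ^ 2 * q ^ 2 - 1) * (ξ 1 1 1) * (ξ 0 1 1) ^ 2 + a1 * a2 * (ξ 0 1 1) * (ξ 0 1 2) * (ξ 1 1 0) - a1 * x ^ 2 * q ^ 2 * (ξ 0 1 0) * (ξ 1 1 1) * (ξ 0 1 2)) * (ξ 0 1 0) * ((ξ 0 0 0) * (ξ 0 1 1) * (ξ 1 1 1) - (ξ 0 0 1) * (a1 * a2 * ((ξ 1 1 0) * (ξ 0 1 1)) - a1 * ((ξ 1 1 1) * (ξ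 0 1 0))) - (ξ 0 0 0) * ((ξ 1 1 1) * (ξ 0 1 1) - a2 * ((ξ 0 1 2) * (ξ 1 1 0)))) + (ξ 0 1 0) * ((ξ 1 1 1) * (ξ 0 1 1) - a2 * ((ξ 0 1 2) * (ξ 1 1 0))) * (a1 * a2 * (ξ 0 0 0) * (ξ 0 1 1) * (ξ 0 1 2) * (ξ 1 1 0) - a1 * x ^ 2 * q ^ 2 * (ξ 0 0 0) * (ξ 0 1 0) * (ξ 0 1 2) * (ξ 1 1 1))) * hA1
  subst hf1 hf2 hTf1
  field_simp [hξ 0 0 0, hξ 0 0 1, hξ 0 0 2, hξ 0 1 0, hξ 0 1 1, hξ 0 1 2, hξ 1 1 0, hξ 1 1 1]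
  linear_combination key

end
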